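/- arXiv:2508.18521 — 2 statements merged into one kernel-verified Lean document; each statement's English description precedes it below -/
import Mathlib

section
/- For every natural number C ≥ 1 and every odd prime q with q > C, there exist infinitely many primes p such that: (i) p ≡ 1 (mod 4); (ii) every integer z with 1 ≤ z ≤ C is a quadratic residue mod p; and (iii) q is a quadratic non-residue mod p. -/
/-- An integer `z` is a quadratic residue mod a prime `p` if `p ∤ z` and
`z ≡ n²  (mod p)` for some integer `n`. -/
def IsQuadRes (p z : ℤ) : Prop := ¬ p ∣ z ∧ ∃ n : ℤ, z ≡ n ^ 2 [ZMOD p]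

/-- An integer `z` is a quadratic non-residue mod a prime `p` if `p ∤ z` and
`z` is not congruent to a square mod `p`. -/
def IsQuadNonRes (p z : ℤ) : Prop := ¬ p ∣ z ∧ ¬ ∃ n : ℤ, z ≡ n ^ 2 [ZMOD p]

/-- If `p ≡ 1 (mod 8)` and `p ≡ 1 (mod ℓ)` for every prime `ℓ ≤ C`, then every
`1 ≤ n ≤ C` is a square mod `p`. -/
lemma aux_sq (C p : ℕ) (hp : p.Prime) (hp8 : p % 8 = 1)
    (hpl : ∀ ℓ : ℕ, Nat.Prime ℓ → ℓ ≤ C → p ≡ 1 [MOD ℓ]) :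
    ∀ n : ℕ, 1 ≤ n → n ≤ C → IsSquare (n : ZMod p) := by
  haveI := Fact.mk hp
  have hp2 : p ≠ 2 := by rintro rfl; omega
  have hp4 : p % 4 = 1 := by omega
  intro n
  induction n using Nat.strong_induction_on with
  | _ n ih =>
    intro h1 hnC
    rcases eq_or_lt_of_le h1 with h | h
    · rw [← h]; simpa using isSquare_one
    · by_cases hn : n.Prime
      · rcases eq_or_ne n 2 with rfl | h2
        · have := (ZMod.exists_sq_eq_two_iff (p := p) hp2).mpr (Or.inl hp8)
          simpa using this
        · haveI := Fact.mk hn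
          rw [ZMod.exists_sq_eq_prime_iff_of_mod_four_eq_one hp4 h2]
          have hmod := hpl n hn hnC
          have : (p : ZMod n) = ((1 : ℕ) : ZMod n) :=
            (ZMod.natCast_eq_natCast_iff _ _ _).mpr hmod
          rw [this]
          simpa using isSquare_one
      · obtain ⟨m, hmdvd, hm2, hmlt⟩ := Nat.exists_dvd_of_not_prime2 (by omega) hn
        obtain ⟨k, rfl⟩ := hmdvd
        have hk1 : 1 ≤ k := by
          rcases Nat.eq_zero_or_pos k with rfl | h; · omega
          · exact h
        have hm1 : 1 ≤ m := by omega
        have hklt : k < m * k := by nlinarith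
        have hsm := ih m hmlt hm1 (le_trans hmlt.le hnC)
        have hsk := ih k hklt hk1 (le_trans (le_of_lt hklt) hnC)
        have : ((m * k : ℕ) : ZMod p) = (m : ZMod p) * (k : ZMod p) := by push_cast; ring
        rw [this]
        exact hsm.mul hsk

/-- For every `C ≥ 1` and every odd prime `q > C`, there exist infinitely many
primes `p` with `p ≡ 1 (mod 4)`, every integer `1 ≤ z ≤ C` a quadratic residue
mod `p`, and `q` a quadratic non-residue mod `p`. -/
theorem infinitely_many_primes_residue_pattern (C : ℕ) (hC : 1 ≤ C)
    (q : ℕ) (hq : Nat.Prime q) (hqodd : Odd q) (hqC : C < q) :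
    {p : ℕ | Nat.Prime p ∧ p % 4 = 1 ∧
      (∀ z : ℤ, 1 ≤ z → z ≤ (C : ℤ) → IsQuadRes (p : ℤ) z) ∧
      IsQuadNonRes (p : ℤ) (q : ℤ)}.Infinite := by
  haveI := Fact.mk hq
  have hq2 : q ≠ 2 := by rintro rfl; exact (by decide : ¬ Odd 2) hqodd
  -- a quadratic non-residue mod q
  obtain ⟨b, hb⟩ := FiniteField.exists_nonsquare (F := ZMod q)
    (by rw [ZMod.ringChar_zmod_n]; exact hq2)
  have hb0 : b ≠ 0 := by rintro rfl; exact hb ⟨0, by simp⟩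
  set M₁ : ℕ := 8 * C.factorial with hM₁
  have hM₁pos : 0 < M₁ := by positivity
  have hco : M₁.Coprime q := by
    rw [Nat.coprime_comm]
    rw [Nat.Prime.coprime_iff_not_dvd hq]
    intro hdvd
    rcases (Nat.Prime.dvd_mul hq).mp hdvd with h | h
    · have h' : q ∣ 2 ^ 3 := by norm_num; exact h
      exact hq2 ((Nat.prime_dvd_prime_iff_eq hq Nat.prime_two).mp (hq.dvd_of_dvd_pow h'))
    · exact absurd ((Nat.Prime.dvd_factorial hq).mp h) (by omega)
  haveI : NeZero (M₁ * q) := ⟨Nat.mul_ne_zero hM₁pos.ne' hq.pos.ne'⟩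
  let e := ZMod.chineseRemainder hco
  set a : ZMod (M₁ * q) := e.symm (1, b) with ha_def
  have ha : IsUnit a := by
    apply IsUnit.map e.symm.toRingHom
    exact ⟨⟨(1, b), (1, b⁻¹), by simp [Prod.ext_iff, mul_inv_cancel₀ hb0],
      by simp [Prod.ext_iff, inv_mul_cancel₀ hb0]⟩, rfl⟩
  apply Set.Infinite.mono ?_ (Nat.infinite_setOfPred_prime_and_eq_mod ha)
  rintro p ⟨hp, hpa⟩
  haveI := Fact.mk hp
  have key : ((p : ZMod M₁), (p : ZMod q)) = (1, b) := by
    have h := congrArg e hpa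
    rw [RingEquiv.apply_symm_apply] at h
    rw [← h, map_natCast]
    ext <;> simp
  have h1 : (p : ZMod M₁) = 1 := by have := congrArg Prod.fst key; simpa using this
  have h2 : (p : ZMod q) = b := by have := congrArg Prod.snd key; simpa using this
  have hmodM : p ≡ 1 [MOD M₁] := by
    rw [← ZMod.natCast_eq_natCast_iff]; simpa using h1
  have hp8 : p % 8 = 1 := by
    have h8 : p ≡ 1 [MOD 8] := hmodM.of_dvd ⟨C.factorial, rfl⟩
    simpa [Nat.ModEq] using h8
  have hp4 : p % 4 = 1 := by omega
  have hpl : ∀ ℓ : ℕ, Nat.Prime ℓ → ℓ ≤ C → p ≡ 1 [MOD ℓ] := by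
    intro ℓ hℓ hℓC
    exact hmodM.of_dvd (Dvd.dvd.mul_left (Nat.dvd_factorial hℓ.pos hℓC) 8)
  -- p > C
  have hpC : C < p := by
    by_contra hle
    push_neg at hle
    have := hpl p hp hle
    have h1p : 1 % p = 1 := Nat.mod_eq_of_lt hp.one_lt
    have := this
    simp only [Nat.ModEq, Nat.mod_self, h1p] at this
    omega
  refine ⟨hp, hp4, ?_, ?_⟩
  · -- every 1 ≤ z ≤ C is a quadratic residue
    intro z hz1 hzC
    constructor
    · intro hdvd
      have := Int.le_of_dvd (by omega) hdvd
      have : (p : ℤ) ≤ (C : ℤ) := le_trans this hzC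
      exact_mod_cast absurd this (by exact_mod_cast not_le.mpr hpC)
    · have hzn : z = (z.toNat : ℤ) := (Int.toNat_of_nonneg (by omega)).symm
      have h1' : 1 ≤ z.toNat := by omega
      have h2' : z.toNat ≤ C := by omega
      obtain ⟨r, hr⟩ := aux_sq C p hp hp8 hpl z.toNat h1' h2'
      refine ⟨(r.val : ℤ), ?_⟩
      rw [← ZMod.intCast_eq_intCast_iff, hzn]
      push_cast [ZMod.natCast_val, ZMod.cast_id]
      rw [hr]; ring
  · -- q is a quadratic non-residue
    constructor
    · intro hdvd
      have hdvd' : p ∣ q := by exact_mod_cast hdvd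
      have := (Nat.prime_dvd_prime_iff_eq hp hq).mp hdvd'
      rw [this] at h2
      simp [ZMod.natCast_self] at h2
      exact hb0 h2.symm
    · rintro ⟨n, hn⟩
      have hsq : IsSquare ((q : ℕ) : ZMod p) := by
        have := (ZMod.intCast_eq_intCast_iff _ _ _).mpr hn
        refine ⟨(n : ZMod p), ?_⟩
        have : (((q : ℤ)) : ZMod p) = ((n ^ 2 : ℤ) : ZMod p) := this
        push_cast at this ⊢
        rw [this]; ring
      rw [ZMod.exists_sq_eq_prime_iff_of_mod_four_eq_one hp4 hq2] at hsq
      rw [h2] at hsq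
      exact hb hsq
end

section
/- Let p ≥ 2 be an integer and let q, q' be integers. For an integer u, define the ℚ/ℤ-valued bilinear map λ_u on ℤ/pℤ by λ_u(a,b) = (−u·ā·b̄/p) + ℤ ∈ ℚ/ℤ, where ā, b̄ ∈ ℤ are any integer representatives of a, b (this is well defined). Suppose there exists an additive group isomorphism f : ℤ/pℤ → ℤ/pℤ such that λ_{q'}(f(a), f(b)) = λ_q(a,b) for all a, b ∈ ℤ/pℤ. Then there exists an integer n with q·q' ≡ n² (mod p). -/
/-- The model linking form of the `p/u`-surgery on a knot: the `ℚ/ℤ`-valued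
bilinear map on `ℤ/pℤ` given by `λ_u(a,b) = -u·a·b/p + ℤ`, computed using the
canonical integer representatives (it is well defined on residue classes). -/
noncomputable def linkingForm (p : ℕ) (u : ℤ) (a b : ZMod p) : AddCircle (1 : ℚ) :=
  (((-u * (a.val : ℤ) * (b.val : ℤ) : ℤ) : ℚ) / (p : ℚ) : ℚ)

/-- If the linking forms `λ_q` and `λ_{q'}` on `ℤ/pℤ` are equivalent via an
additive group isomorphism of `ℤ/pℤ`, then `q·q'` is a square mod `p`. -/
theorem linking_form_iso_implies_square (p : ℕ) (hp : 2 ≤ p) (q q' : ℤ)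
    (f : ZMod p ≃+ ZMod p)
    (hf : ∀ a b : ZMod p, linkingForm p q' (f a) (f b) = linkingForm p q a b) :
    ∃ n : ℤ, q * q' ≡ n ^ 2 [ZMOD (p : ℤ)] := by
  haveI : Fact (1 < p) := ⟨hp⟩
  have hp0 : (p : ℚ) ≠ 0 := by positivity
  set c : ℤ := ((f 1).val : ℤ) with hc
  have h := hf 1 1
  unfold linkingForm at h
  rw [ZMod.val_one] at h
  rw [QuotientAddGroup.eq] at h
  obtain ⟨k, hk⟩ := AddSubgroup.mem_zmultiples_iff.mp h
  simp only [zsmul_eq_mul, mul_one] at hk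
  have h3 : ((k : ℚ)) * p =
      (((-q * (1:ℤ) * (1:ℤ) : ℤ) : ℚ)) - (((-q' * c * c : ℤ) : ℚ)) := by
    rw [hk, hc]; field_simp; ring
  have key : k * (p : ℤ) = (-q * 1 * 1) - (-q' * c * c) := by exact_mod_cast h3
  refine ⟨q' * c, ?_⟩
  exact Int.ModEq.symm ((Int.modEq_iff_dvd).mpr ⟨-q' * k, by linear_combination q' * key⟩)
end
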